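/- Let y ∈ R^n with ‖y‖_p^p = n (p ≥ 1), and suppose there exists an index k with ||y_k| − 1| ≥ c for some c ∈ (0, 1/2]. Then there exists an index m (indices mod n) such that ||y_m| − |y_{m+1}|| ≥ c/n and max(|y_m|, |y_{m+1}|) ≥ 1 − c. -/

import Mathlib

open Finset
open scoped Fin.NatCast Fin.CommRing

/-- Along a finite walk of length `L ≤ n`, if the value starts at least `B + c` and ends
at most `B`, some step drops by at least `c/n` while starting at least `B`. -/
lemma key_step (n : ℕ) (c B : ℝ) (hc : 0 < c) (g : ℕ → ℝ) (L : ℕ) (hL : L ≤ n)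
    (h0 : B + c ≤ g 0) (hgL : g L ≤ B) :
    ∃ t, t < L ∧ c / n ≤ g t - g (t + 1) ∧ B ≤ g t := by
  classical
  have hP : ∃ j, j ≤ L ∧ g j ≤ B := ⟨L, le_refl _, hgL⟩
  obtain ⟨hjL, hgj⟩ := Nat.find_spec hP
  set j := Nat.find hP with hjdef
  have hlt : ∀ t < j, B < g t := by
    intro t ht
    have h1 := Nat.find_min hP ht
    push_neg at h1
    exact h1 (le_trans (le_of_lt ht) hjL)
  have hj1 : 1 ≤ j := by
    rcases Nat.eq_zero_or_pos j with h | h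
    · exfalso; rw [h] at hgj; linarith
    · exact h
  by_contra hcon
  push_neg at hcon
  have hsmall : ∀ t < j, g t - g (t + 1) < c / n := by
    intro t ht
    by_contra h2
    push_neg at h2
    have htL : t < L := lt_of_lt_of_le ht hjL
    have := hcon t htL h2
    exact absurd (hlt t ht) (not_lt.mpr (le_of_lt this))
  have hn0 : 0 < n := lt_of_lt_of_le (lt_of_lt_of_le hj1 hjL) hL
  have htel : ∑ t ∈ Finset.range j, (g t - g (t + 1)) = g 0 - g j :=
    Finset.sum_range_sub' g j
  have hsum : g 0 - g j < j * (c / n) := by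
    rw [← htel]
    calc ∑ t ∈ Finset.range j, (g t - g (t + 1))
        < ∑ _t ∈ Finset.range j, (c / n) := by
          apply Finset.sum_lt_sum_of_nonempty
          · exact Finset.nonempty_range_iff.mpr (by omega)
          · intro t ht
            exact hsmall t (Finset.mem_range.mp ht)
      _ = j * (c / n) := by rw [Finset.sum_const, Finset.card_range]; simp
  have hjn : (j : ℝ) ≤ n := by exact_mod_cast le_trans hjL hL
  have hcn : 0 < c / n := div_pos hc (by exact_mod_cast hn0)
  have : (j : ℝ) * (c / n) ≤ n * (c / n) := mul_le_mul_of_nonneg_right hjn (le_of_lt hcn)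
  have hnn : (n : ℝ) * (c / n) = c := by
    field_simp
  have : g 0 - g j < c := by linarith
  linarith

/-- If `‖y‖_p^p = n` and some coordinate has `||y_k| - 1| ≥ c`, then some cyclically
adjacent pair of coordinates differs in absolute value by at least `c/n`, with one of
the two at least `1 - c`. -/
theorem stmt_14 (n : ℕ) (hn : 2 ≤ n) (p c : ℝ) (hp : 1 ≤ p) (hc0 : 0 < c) (hc : c ≤ 1 / 2)
    (y : Fin n → ℝ) (hy : (∑ i, |y i| ^ p) = n) (k : Fin n) (hk : c ≤ |(|y k| - 1)|) :
    ∃ m : Fin n, c / n ≤ |(|y m| - |y (m + ⟨1, by omega⟩)|)| ∧ 1 - c ≤ max |y m| |y (m + ⟨1, by omega⟩)| := by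
  haveI : NeZero n := ⟨by omega⟩
  have hone : (⟨1, by omega⟩ : Fin n) = 1 := by
    apply Fin.ext
    simp [Fin.val_one', Nat.mod_eq_of_lt (by omega : 1 < n)]
  have hppos : 0 < p := lt_of_lt_of_le one_pos hp
  have hmax : ∃ i, 1 ≤ |y i| := by
    by_contra h
    push_neg at h
    have hlt : ∑ i, |y i| ^ p < ∑ _i : Fin n, (1 : ℝ) := by
      apply Finset.sum_lt_sum_of_nonempty Finset.univ_nonempty
      intro i _
      exact Real.rpow_lt_one (abs_nonneg _) (h i) hppos
    rw [hy] at hlt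
    simp at hlt
  have hmin : ∃ i, |y i| ≤ 1 := by
    by_contra h
    push_neg at h
    have hlt : ∑ _i : Fin n, (1 : ℝ) < ∑ i, |y i| ^ p := by
      apply Finset.sum_lt_sum_of_nonempty Finset.univ_nonempty
      intro i _
      exact (Real.one_lt_rpow_iff_of_pos (lt_trans one_pos (h i))).mpr (Or.inl ⟨h i, hppos⟩)
    rw [hy] at hlt
    simp at hlt
  rcases le_abs.mp hk with hup | hdown
  · -- 1 + c ≤ |y k| ; walk backwards from k to a coordinate ≤ 1
    obtain ⟨i₁, hi₁⟩ := hmin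
    set L := (k - i₁).val with hLdef
    set g : ℕ → ℝ := fun t => |y (k - (t : Fin n))| with hgdef
    have hg0 : 1 + c ≤ g 0 := by
      simp only [hgdef, Nat.cast_zero, sub_zero]
      linarith
    have hgL : g L ≤ 1 := by
      have : ((L : ℕ) : Fin n) = k - i₁ := by
        rw [hLdef]; exact Fin.cast_val_eq_self _
      simp only [hgdef, this]
      have : k - (k - i₁) = i₁ := by ring
      rw [this]; exact hi₁
    obtain ⟨t, htL, hstep, hBt⟩ := key_step n c 1 hc0 g L (le_of_lt (Fin.is_lt _))
      (by linarith) hgL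
    refine ⟨k - ((t + 1 : ℕ) : Fin n), ?_, ?_⟩
    · rw [hone]
      have hsucc : k - ((t + 1 : ℕ) : Fin n) + 1 = k - (t : Fin n) := by
        push_cast
        ring
      rw [hsucc]
      calc c / n ≤ g t - g (t + 1) := hstep
        _ ≤ |g (t + 1) - g t| := by rw [abs_sub_comm]; exact le_abs_self _
        _ = _ := rfl
    · rw [hone]
      have hsucc : k - ((t + 1 : ℕ) : Fin n) + 1 = k - (t : Fin n) := by
        push_cast
        ring
      rw [hsucc]
      have : (1 : ℝ) - c ≤ g t := by linarith
      exact le_trans this (le_max_right _ _)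
  · -- |y k| ≤ 1 - c ; walk forwards from a coordinate ≥ 1 to k
    obtain ⟨i₀, hi₀⟩ := hmax
    set L := (k - i₀).val with hLdef
    set g : ℕ → ℝ := fun t => |y (i₀ + (t : Fin n))| with hgdef
    have hg0 : (1 - c) + c ≤ g 0 := by
      simp only [hgdef, Nat.cast_zero, add_zero]
      linarith
    have hgL : g L ≤ 1 - c := by
      have hcast : ((L : ℕ) : Fin n) = k - i₀ := by
        rw [hLdef]; exact Fin.cast_val_eq_self _
      simp only [hgdef, hcast]
      have : i₀ + (k - i₀) = k := by ring
      rw [this]; linarith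
    obtain ⟨t, htL, hstep, hBt⟩ := key_step n c (1 - c) hc0 g L (le_of_lt (Fin.is_lt _))
      hg0 hgL
    refine ⟨i₀ + (t : Fin n), ?_, ?_⟩
    · rw [hone]
      have hsucc : i₀ + (t : Fin n) + 1 = i₀ + ((t + 1 : ℕ) : Fin n) := by
        push_cast
        ring
      rw [hsucc]
      calc c / n ≤ g t - g (t + 1) := hstep
        _ ≤ |g t - g (t + 1)| := le_abs_self _
        _ = _ := rfl
    · rw [hone]
      exact le_trans hBt (le_max_left _ _)
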